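/- Let SO(3)_2 = {L ∈ M₃(ℚ_2) : LᵀL = I and det L = 1}, and let e₁, e₂, e₃ be the standard basis vectors of ℚ_2³. Then there exists M ∈ SO(3)_2 admitting none of the twelve Cardano or Euler decompositions: for all indices i, j, k ∈ {1, 2, 3} with i ≠ j and j ≠ k, there do not exist X, Y, Z ∈ SO(3)_2 with X e_i = e_i, Y e_j = e_j, Z e_k = e_k and M = X·Y·Z. -/

import Mathlib

open Matrix

namespace NoCE

lemma norm_two : ‖(2:ℚ_[2])‖ = 1/2 := by
  have h := @Padic.norm_p 2 _
  norm_num at h ⊢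
  exact_mod_cast h

lemma disc_le (x : ℚ_[2]) (n : ℤ) : ‖x‖ ≤ (2:ℝ) ^ n ↔ ‖x‖ < (2:ℝ) ^ (n+1) := by
  have := Padic.norm_le_pow_iff_norm_lt_pow_add_one (p := 2) x n
  norm_num at this
  exact this

lemma disc1 (x : ℚ_[2]) : ‖x‖ < 1 ↔ ‖x‖ ≤ 1/2 := by
  have := disc_le x (-1); norm_num at this; exact this.symm

lemma disc2 (x : ℚ_[2]) : ‖x‖ < 1/2 ↔ ‖x‖ ≤ 1/4 := by
  have := disc_le x (-2); norm_num at this; exact this.symm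

lemma disc0 (x : ℚ_[2]) : ‖x‖ ≤ 1 ↔ ‖x‖ < 2 := by
  have := disc_le x 0; norm_num at this; exact this

lemma res2 {t : ℚ_[2]} (h : ‖t‖ = 1) : ‖1 + t‖ ≤ 1/2 := by
  rw [← disc1]
  by_contra hc
  push_neg at hc
  have h1 : ‖(1:ℚ_[2]) + t‖ ≤ 1 := by
    calc ‖(1:ℚ_[2]) + t‖ ≤ max ‖(1:ℚ_[2])‖ ‖t‖ := Padic.nonarchimedean _ _
    _ ≤ 1 := by simp [h]
  have heq : ‖(1:ℚ_[2]) + t‖ = 1 := le_antisymm h1 hc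
  -- move to ℤ_[2]
  set z : ℤ_[2] := ⟨t, le_of_eq h⟩ with hz
  have hzt : ((z : ℤ_[2]) : ℚ_[2]) = t := rfl
  have hznorm : ‖z‖ = 1 := by rw [← PadicInt.padic_norm_e_of_padicInt, hzt, h]
  have h1z : ‖(1 + z : ℤ_[2])‖ = 1 := by
    rw [← PadicInt.padic_norm_e_of_padicInt]
    push_cast [hzt]
    exact heq
  have hu : IsUnit z := PadicInt.isUnit_iff.mpr hznorm
  have hu1 : IsUnit (1 + z) := PadicInt.isUnit_iff.mpr h1z
  have key : ∀ w : ℤ_[2], IsUnit w → PadicInt.toZMod w ≠ 0 := by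
    intro w hw hw0
    have : w ∈ RingHom.ker (PadicInt.toZMod (p := 2)) := hw0
    rw [PadicInt.ker_toZMod] at this
    exact (IsLocalRing.mem_maximalIdeal w).mp this hw
  have e1 : ∀ x : ZMod 2, x ≠ 0 → x = 1 := by decide
  have hz1 : PadicInt.toZMod z = 1 := e1 _ (key z hu)
  have : PadicInt.toZMod (1 + z) = 0 := by
    rw [map_add, _root_.map_one, hz1]; decide
  exact key _ hu1 this

lemma oddsq {t : ℚ_[2]} (h : ‖t‖ = 1) : ‖1 - t^2‖ ≤ 1/8 := by
  have hneg : ‖-t‖ = 1 := by rwa [norm_neg]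
  have h1 : ‖(1:ℚ_[2]) + t‖ ≤ 1/2 := res2 h
  have h2 : ‖(1:ℚ_[2]) - t‖ ≤ 1/2 := by
    have := res2 hneg; rwa [← sub_eq_add_neg] at this
  have hfac : (1:ℚ_[2]) - t^2 = (1+t) * (1-t) := by ring
  rw [hfac, Padic.padicNormE.mul]
  by_cases hc : ‖(1:ℚ_[2]) + t‖ ≤ 1/4
  · nlinarith [norm_nonneg ((1:ℚ_[2]) - t), norm_nonneg ((1:ℚ_[2]) + t)]
  · push_neg at hc
    have he : ‖(1:ℚ_[2]) + t‖ = 1/2 := by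
      rcases lt_or_eq_of_le h1 with hlt | he
      · exact absurd ((disc2 _).mp hlt) (by linarith)
      · exact he
    -- u = (1+t)/2 is a unit
    have hu : ‖(1 + t)/2‖ = 1 := by
      rw [norm_div, norm_two, he]; norm_num
    have := res2 (t := -((1+t)/2)) (by rwa [norm_neg])
    rw [← sub_eq_add_neg] at this
    have hid : (1:ℚ_[2]) - (1+t)/2 = (1 - t)/2 := by ring
    rw [hid, norm_div, norm_two] at this
    -- ‖1 - t‖ ≤ 1/4
    have h2' : ‖(1:ℚ_[2]) - t‖ ≤ 1/4 := by
      rw [div_le_iff₀ (by norm_num)] at this; linarith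
    nlinarith [norm_nonneg ((1:ℚ_[2]) + t)]

end NoCE

namespace NoCE

lemma not_big {x y : ℚ_[2]} (h : x^2 + y^2 = 1) (hx : 1 < ‖x‖) (hxy : ‖y‖ ≤ ‖x‖) : False := by
  have hx2 : 2 ≤ ‖x‖ := by
    by_contra hc; push_neg at hc
    exact absurd ((disc0 x).mpr hc) (by linarith)
  have hx0 : x ≠ 0 := by intro h0; rw [h0] at hx; simp at hx; linarith
  rcases lt_or_eq_of_le hxy with hlt | heq
  · -- ‖y‖ < ‖x‖ : ‖x²+y²‖ = ‖x‖² > 1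
    have h1 : ‖y^2‖ < ‖x^2‖ := by
      rw [pow_two, pow_two, Padic.padicNormE.mul, Padic.padicNormE.mul]
      have := norm_nonneg y
      nlinarith
    have : ‖x^2 + y^2‖ = max ‖x^2‖ ‖y^2‖ := Padic.add_eq_max_of_ne (by linarith)
    rw [h, max_eq_left h1.le, pow_two, Padic.padicNormE.mul, norm_one] at this
    nlinarith
  · -- ‖y‖ = ‖x‖
    set t := y / x with ht
    have htn : ‖t‖ = 1 := by
      rw [ht, norm_div, heq]
      exact div_self (by linarith)
    have hsq : x^2 * (1 + t^2) = 1 := by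
      rw [ht]; field_simp; linear_combination h
    have hnt : ‖1 + t^2‖ = 1/2 := by
      have hid : (1:ℚ_[2]) + t^2 = 2 - (1 - t^2) := by ring
      have ho := oddsq htn
      rw [hid, sub_eq_add_neg]
      rw [Padic.add_eq_max_of_ne]
      · rw [norm_two, norm_neg]
        rw [max_eq_left (by linarith)]
      · rw [norm_two, norm_neg]; intro hcon; rw [← hcon] at ho; linarith
    have := congrArg (‖·‖) hsq
    simp only [Padic.padicNormE.mul] at this
    rw [hnt] at this
    simp at this
    nlinarith

lemma sum2 {a b : ℚ_[2]} (h : a^2 + b^2 = 1) :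
    (‖a‖ = 1 ∧ ‖b‖ ≤ 1/4) ∨ (‖b‖ = 1 ∧ ‖a‖ ≤ 1/4) := by
  have hb' : b^2 + a^2 = 1 := by linear_combination h
  have ha1 : ‖a‖ ≤ 1 := by
    by_contra hc; push_neg at hc
    rcases le_total ‖b‖ ‖a‖ with hle | hle
    · exact not_big h hc hle
    · exact not_big hb' (lt_of_lt_of_le hc hle) hle
  have hb1 : ‖b‖ ≤ 1 := by
    by_contra hc; push_neg at hc
    rcases le_total ‖a‖ ‖b‖ with hle | hle
    · exact not_big hb' hc hle
    · exact not_big h (lt_of_lt_of_le hc hle) hle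
  -- not both units
  have hnotboth : ¬ (‖a‖ = 1 ∧ ‖b‖ = 1) := by
    rintro ⟨hau, hbu⟩
    have h1 := oddsq hau
    have h2 := oddsq hbu
    have hid : a^2 + b^2 = 2 - ((1 - a^2) + (1 - b^2)) := by ring
    have hsmall : ‖(1 - a^2) + (1 - b^2)‖ ≤ 1/8 := by
      calc ‖(1 - a^2) + (1 - b^2)‖ ≤ max ‖1 - a^2‖ ‖1 - b^2‖ := Padic.nonarchimedean _ _
      _ ≤ 1/8 := max_le h1 h2
    have : ‖a^2 + b^2‖ = 1/2 := by
      rw [hid, sub_eq_add_neg, Padic.add_eq_max_of_ne]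
      · rw [norm_two, norm_neg, max_eq_left (by linarith)]
      · rw [norm_two, norm_neg]; intro hcon; rw [← hcon] at hsmall; linarith
    rw [h, norm_one] at this; norm_num at this
  -- not both small
  have hnotsmall : ¬ (‖a‖ < 1 ∧ ‖b‖ < 1) := by
    rintro ⟨hau, hbu⟩
    have : ‖a^2 + b^2‖ < 1 := by
      calc ‖a^2 + b^2‖ ≤ max ‖a^2‖ ‖b^2‖ := Padic.nonarchimedean _ _
      _ < 1 := by
          rw [pow_two, pow_two, Padic.padicNormE.mul, Padic.padicNormE.mul]
          have := norm_nonneg a; have := norm_nonneg b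
          apply max_lt <;> nlinarith
    rw [h] at this; simp at this
  -- helper : unit + small → small ≤ 1/4
  have key : ∀ x y : ℚ_[2], x^2 + y^2 = 1 → ‖x‖ = 1 → ‖y‖ < 1 → ‖y‖ ≤ 1/4 := by
    intro x y hxy hx hy
    have hy2 : ‖y‖^2 ≤ 1/8 := by
      have : y^2 = 1 - x^2 := by linear_combination hxy
      have h8 := oddsq hx
      rw [← this] at h8
      rw [pow_two, Padic.padicNormE.mul] at h8
      nlinarith [norm_nonneg y]
    by_contra hc; push_neg at hc
    have h12 : ‖y‖ ≤ 1/2 := (disc1 y).mp hy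
    have : ‖y‖ = 1/2 := by
      rcases lt_or_eq_of_le h12 with hlt | he
      · exact absurd ((disc2 _).mp hlt) (by linarith)
      · exact he
    rw [this] at hy2; norm_num at hy2
  rcases lt_or_eq_of_le ha1 with ha | ha
  · rcases lt_or_eq_of_le hb1 with hb | hb
    · exact absurd ⟨ha, hb⟩ hnotsmall
    · exact Or.inr ⟨hb, key b a hb' hb ha⟩
  · rcases lt_or_eq_of_le hb1 with hb | hb
    · exact Or.inl ⟨ha, key a b h ha hb⟩
    · exact absurd ⟨ha, hb⟩ hnotboth

end NoCE

namespace NoCE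

/-- Each row has one unit entry and the rest of norm ≤ 1/4. -/
def Good (L : Matrix (Fin 3) (Fin 3) ℚ_[2]) : Prop :=
  ∀ a, ∃ c₀, ‖L a c₀‖ = 1 ∧ ∀ c, c ≠ c₀ → ‖L a c‖ ≤ 1/4

lemma rowP {v : Fin 3 → ℚ_[2]} {i : Fin 3}
    (hsum : v 0 ^ 2 + v 1 ^ 2 + v 2 ^ 2 = 1) (h0 : v i = 0) :
    ∃ c₀, ‖v c₀‖ = 1 ∧ ∀ c, c ≠ c₀ → ‖v c‖ ≤ 1/4 := by
  fin_cases i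
  · have hs : v 1 ^ 2 + v 2 ^ 2 = 1 := by
      rw [show ((⟨0, by omega⟩ : Fin 3) = 0) from rfl] at h0
      rw [h0] at hsum; linear_combination hsum
    rcases sum2 hs with ⟨ha, hb⟩ | ⟨ha, hb⟩
    · refine ⟨1, ha, ?_⟩
      intro c hc; fin_cases c
      · show ‖v 0‖ ≤ 1/4
        rw [show v 0 = 0 from h0, norm_zero]; norm_num
      · exact absurd rfl hc
      · exact hb
    · refine ⟨2, ha, ?_⟩
      intro c hc; fin_cases c
      · show ‖v 0‖ ≤ 1/4
        rw [show v 0 = 0 from h0, norm_zero]; norm_num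
      · exact hb
      · exact absurd rfl hc
  · have hs : v 0 ^ 2 + v 2 ^ 2 = 1 := by
      rw [show ((⟨1, by omega⟩ : Fin 3) = 1) from rfl] at h0
      rw [h0] at hsum; linear_combination hsum
    rcases sum2 hs with ⟨ha, hb⟩ | ⟨ha, hb⟩
    · refine ⟨0, ha, ?_⟩
      intro c hc; fin_cases c
      · exact absurd rfl hc
      · show ‖v 1‖ ≤ 1/4
        rw [show v 1 = 0 from h0, norm_zero]; norm_num
      · exact hb
    · refine ⟨2, ha, ?_⟩
      intro c hc; fin_cases c
      · exact hb
      · show ‖v 1‖ ≤ 1/4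
        rw [show v 1 = 0 from h0, norm_zero]; norm_num
      · exact absurd rfl hc
  · have hs : v 0 ^ 2 + v 1 ^ 2 = 1 := by
      rw [show ((⟨2, by omega⟩ : Fin 3) = 2) from rfl] at h0
      rw [h0] at hsum; linear_combination hsum
    rcases sum2 hs with ⟨ha, hb⟩ | ⟨ha, hb⟩
    · refine ⟨0, ha, ?_⟩
      intro c hc; fin_cases c
      · exact absurd rfl hc
      · exact hb
      · show ‖v 2‖ ≤ 1/4
        rw [show v 2 = 0 from h0, norm_zero]; norm_num
    · refine ⟨1, ha, ?_⟩
      intro c hc; fin_cases c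
      · exact hb
      · exact absurd rfl hc
      · show ‖v 2‖ ≤ 1/4
        rw [show v 2 = 0 from h0, norm_zero]; norm_num

lemma axisGood {L : Matrix (Fin 3) (Fin 3) ℚ_[2]} {i : Fin 3}
    (hL : Lᵀ * L = 1) (hfix : L.mulVec (Pi.single i 1) = Pi.single i 1) :
    Good L := by
  have hcol : ∀ a, L a i = (Pi.single i (1:ℚ_[2]) : Fin 3 → ℚ_[2]) a := by
    intro a
    have := congrFun hfix a
    simpa using this
  have hrow : L * Lᵀ = 1 := mul_eq_one_comm.mp hL
  have hrowsum : ∀ a, (L a 0)^2 + (L a 1)^2 + (L a 2)^2 = 1 := by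
    intro a
    have := congrFun (congrFun hrow a) a
    simp [Matrix.mul_apply, Fin.sum_univ_three, Matrix.one_apply, Matrix.transpose_apply] at this
    linear_combination this
  have hrowi : ∀ b, b ≠ i → L i b = 0 := by
    intro b hb
    have h2 := congrFun (congrFun hL b) i
    rw [Matrix.one_apply_ne hb] at h2
    simp only [Matrix.mul_apply, Matrix.transpose_apply, Fin.sum_univ_three] at h2
    rw [hcol 0, hcol 1, hcol 2] at h2
    fin_cases i <;> simp_all [Pi.single_apply]
  intro a
  by_cases hai : a = i
  · subst hai
    refine ⟨a, ?_, ?_⟩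
    · have : L a a = 1 := by rw [hcol a, Pi.single_eq_same]
      rw [this]; exact norm_one
    · intro c hc; rw [hrowi c hc]; norm_num
  · exact rowP (hrowsum a) (show L a i = 0 by rw [hcol a, Pi.single_eq_of_ne hai])

lemma Good.le_one {L : Matrix (Fin 3) (Fin 3) ℚ_[2]} (h : Good L) :
    ∀ a b, ‖L a b‖ ≤ 1 := by
  intro a b
  obtain ⟨c₀, h1, h2⟩ := h a
  by_cases hb : b = c₀
  · rw [hb, h1]
  · linarith [h2 b hb]

lemma Good.mul {X Y : Matrix (Fin 3) (Fin 3) ℚ_[2]} (hX : Good X) (hY : Good Y) :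
    Good (X * Y) := by
  intro a
  obtain ⟨c₀, hc₀, hcs⟩ := hX a
  obtain ⟨d₀, hd₀, hds⟩ := hY c₀
  have hsplit : ∀ b, (X * Y) a b
      = X a c₀ * Y c₀ b + ∑ c ∈ Finset.univ.erase c₀, X a c * Y c b := by
    intro b
    rw [Matrix.mul_apply]
    exact (Finset.add_sum_erase _ _ (Finset.mem_univ c₀)).symm
  have hrest : ∀ b, ‖∑ c ∈ Finset.univ.erase c₀, X a c * Y c b‖ ≤ 1/4 := by
    intro b
    apply IsUltrametricDist.norm_sum_le_of_forall_le_of_nonneg (by norm_num)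
    intro c hc
    have hc' : c ≠ c₀ := (Finset.mem_erase.mp hc).1
    rw [Padic.padicNormE.mul]
    calc ‖X a c‖ * ‖Y c b‖ ≤ (1/4) * 1 :=
      mul_le_mul (hcs c hc') (hY.le_one c b) (norm_nonneg _) (by norm_num)
    _ = 1/4 := by norm_num
  refine ⟨d₀, ?_, ?_⟩
  · rw [hsplit d₀, Padic.add_eq_max_of_ne]
    · rw [Padic.padicNormE.mul, hc₀, hd₀]
      rw [max_eq_left (by linarith [hrest d₀])]
      norm_num
    · rw [Padic.padicNormE.mul, hc₀, hd₀]
      intro hcon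
      have := hrest d₀
      rw [← hcon] at this; norm_num at this
  · intro b hb
    rw [hsplit b]
    calc ‖X a c₀ * Y c₀ b + _‖
        ≤ max ‖X a c₀ * Y c₀ b‖ ‖∑ c ∈ Finset.univ.erase c₀, X a c * Y c b‖ :=
          Padic.nonarchimedean _ _
      _ ≤ 1/4 := by
          apply max_le _ (hrest b)
          rw [Padic.padicNormE.mul, hc₀, one_mul]
          exact hds b hb

end NoCE

namespace NoCE

lemma norm_three : ‖(3:ℚ_[2])‖ = 1 := by
  have h1 : ‖((3:ℤ) : ℚ_[2])‖ ≤ 1 := Padic.norm_int_le_one _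
  have h2 : ¬ (‖((3:ℤ) : ℚ_[2])‖ < 1) := by
    rw [Padic.norm_intCast_lt_one_iff]; decide
  push_cast at h1 h2
  exact le_antisymm h1 (not_lt.mp h2)

lemma norm_23 : ‖(2/3 : ℚ_[2])‖ = 1/2 := by
  rw [norm_div, norm_two, norm_three]; norm_num

noncomputable def Mex : Matrix (Fin 3) (Fin 3) ℚ_[2] :=
  !![1/3, 2/3, 2/3; 2/3, 1/3, -(2/3); -(2/3), 2/3, -(1/3)]

lemma Mex_orth : Mexᵀ * Mex = 1 := by
  have h3 : (3:ℚ_[2]) ≠ 0 := by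
    intro hcon
    have := norm_three
    rw [hcon] at this; simp at this
  have ht : Mexᵀ = !![1/3, 2/3, -(2/3); 2/3, 1/3, 2/3; 2/3, -(2/3), -(1/3)] := by
    ext a b; fin_cases a <;> fin_cases b <;> rfl
  rw [ht, Mex, Matrix.mul_fin_three, Matrix.one_fin_three]
  congr 1 <;> field_simp <;> ring

lemma Mex_det : Mex.det = 1 := by
  have h3 : (3:ℚ_[2]) ≠ 0 := by
    intro hcon
    have := norm_three
    rw [hcon] at this; simp at this
  rw [Mex, Matrix.det_fin_three]
  simp [Matrix.vecHead, Matrix.vecTail]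
  ring

lemma Mex_01 : Mex 0 1 = 2/3 := by rw [Mex]; simp

end NoCE

/-- There is an `M ∈ SO(3)_2` admitting none of the twelve Cardano
or Euler decompositions: for all axis orderings `(i, j, k)` with `i ≠ j` and
`j ≠ k`, `M` is not a product `X·Y·Z` of elements of `SO(3)_2` fixing
`e_i`, `e_j`, `e_k` respectively. -/
theorem no_cardano_euler_two_adic
    (SO3 : Set (Matrix (Fin 3) (Fin 3) ℚ_[2]))
    (hSO3 : SO3 = {L | Lᵀ * L = 1 ∧ L.det = 1})
    (e : Fin 3 → (Fin 3 → ℚ_[2])) (he : ∀ i, e i = Pi.single i 1) :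
    ∃ M ∈ SO3, ∀ i j k : Fin 3, i ≠ j → j ≠ k →
      ¬ ∃ X Y Z, X ∈ SO3 ∧ Y ∈ SO3 ∧ Z ∈ SO3 ∧
        X.mulVec (e i) = e i ∧ Y.mulVec (e j) = e j ∧ Z.mulVec (e k) = e k ∧
        M = X * Y * Z := by
  subst hSO3
  refine ⟨NoCE.Mex, ⟨NoCE.Mex_orth, NoCE.Mex_det⟩, ?_⟩
  intro i j k hij hjk ⟨X, Y, Z, hX, hY, hZ, hXe, hYe, hZe, hM⟩
  rw [he] at hXe hYe hZe
  have GX : NoCE.Good X := NoCE.axisGood hX.1 hXe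
  have GY : NoCE.Good Y := NoCE.axisGood hY.1 hYe
  have GZ : NoCE.Good Z := NoCE.axisGood hZ.1 hZe
  have GM : NoCE.Good (X * Y * Z) := (GX.mul GY).mul GZ
  rw [← hM] at GM
  obtain ⟨c₀, h1, h2⟩ := GM 0
  by_cases hc : (1 : Fin 3) = c₀
  · rw [← hc, NoCE.Mex_01, NoCE.norm_23] at h1; norm_num at h1
  · have := h2 1 hc
    rw [NoCE.Mex_01, NoCE.norm_23] at this; norm_num at this
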